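/- For any subset A of a topological space X, e*-cl_θ(A) equals the intersection of all e*-θ-closed sets containing A, and also equals the intersection of all e*-regular sets containing A. -/
import Mathlib


open Set Topology

variable {X : Type*} [TopologicalSpace X]

/-- δ-closure of A. -/
def deltaCl (A : Set X) : Set X :=
  {x | ∀ U : Set X, IsOpen U → x ∈ U → (interior (closure U) ∩ A).Nonempty}

/-- A is e*-open if A ⊆ cl(int(δ-cl A)). -/
def EStarOpen (A : Set X) : Prop := A ⊆ closure (interior (deltaCl A))

/-- A is e*-closed if its complement is e*-open. -/
def EStarClosed (A : Set X) : Prop := EStarOpen Aᶜ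

/-- e*-closure: intersection of all e*-closed supersets. -/
def eStarCl (A : Set X) : Set X := ⋂₀ {F | EStarClosed F ∧ A ⊆ F}

/-- e*-interior: union of all e*-open subsets. -/
def eStarInt (A : Set X) : Set X := ⋃₀ {U | EStarOpen U ∧ U ⊆ A}

/-- e*-regular: both e*-open and e*-closed. -/
def EStarRegular (A : Set X) : Prop := EStarOpen A ∧ EStarClosed A

/-- e*-θ-closure. -/
def eStarClTheta (A : Set X) : Set X :=
  {x | ∀ U : Set X, EStarOpen U → x ∈ U → (eStarCl U ∩ A).Nonempty}

/-- e*-θ-closed. -/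
def EStarThetaClosed (A : Set X) : Prop := A = eStarClTheta A

/-- e*-θ-open. -/
def EStarThetaOpen (A : Set X) : Prop := EStarThetaClosed Aᶜ

/-- quasi e*-θ-closed. -/
def QEStarThetaClosed (A : Set X) : Prop :=
  ∀ U : Set X, EStarThetaOpen U → A ⊆ U → eStarClTheta A ⊆ U

/-- e*-θ-kernel. -/
def eStarKerTheta (A : Set X) : Set X := ⋂₀ {U | EStarThetaOpen U ∧ A ⊆ U}

lemma deltaCl_mono' {A B : Set X} (h : A ⊆ B) : deltaCl A ⊆ deltaCl B := by
  intro x hx U hU hxU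
  obtain ⟨y, hy1, hy2⟩ := hx U hU hxU
  exact ⟨y, hy1, h hy2⟩

lemma subset_deltaCl' (A : Set X) : A ⊆ deltaCl A := by
  intro x hx U hU hxU
  exact ⟨x, interior_maximal subset_closure hU hxU, hx⟩

lemma eStarOpen_of_isOpen' {A : Set X} (h : IsOpen A) : EStarOpen A := by
  intro x hx
  have : A ⊆ interior (deltaCl A) := interior_maximal (subset_deltaCl' A) h
  exact subset_closure (this hx)

lemma eStarClosed_of_isClosed' {A : Set X} (h : IsClosed A) : EStarClosed A :=
  eStarOpen_of_isOpen' h.isOpen_compl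

lemma eStarOpen_sUnion' {S : Set (Set X)} (h : ∀ U ∈ S, EStarOpen U) :
    EStarOpen (⋃₀ S) := by
  intro x hx
  obtain ⟨U, hU, hxU⟩ := hx
  have h1 : closure (interior (deltaCl U)) ⊆ closure (interior (deltaCl (⋃₀ S))) :=
    closure_mono (interior_mono (deltaCl_mono' (subset_sUnion_of_mem hU)))
  exact h1 (h U hU hxU)

lemma eStarClosed_eStarCl' (A : Set X) : EStarClosed (eStarCl A) := by
  have : (eStarCl A)ᶜ = ⋃₀ ((compl '' {F | EStarClosed F ∧ A ⊆ F})) := by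
    simp [eStarCl, sUnion_image, compl_sInter]
  unfold EStarClosed
  rw [this]
  apply eStarOpen_sUnion'
  rintro U ⟨F, ⟨hF, _⟩, rfl⟩
  exact hF

lemma subset_eStarCl' (A : Set X) : A ⊆ eStarCl A := by
  intro x hx F ⟨_, hAF⟩
  exact hAF hx

lemma eStarCl_eq_self' {A : Set X} (h : EStarClosed A) : eStarCl A = A :=
  subset_antisymm (fun _ hx => hx A ⟨h, subset_rfl⟩) (subset_eStarCl' A)

lemma eStarOpen_eStarCl' {A : Set X} (h : EStarOpen A) : EStarOpen (eStarCl A) := by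
  have hW : EStarClosed (closure (interior (deltaCl A))) :=
    eStarClosed_of_isClosed' isClosed_closure
  have h1 : eStarCl A ⊆ closure (interior (deltaCl A)) :=
    fun x hx => hx _ ⟨hW, h⟩
  intro x hx
  have h2 : closure (interior (deltaCl A)) ⊆ closure (interior (deltaCl (eStarCl A))) :=
    closure_mono (interior_mono (deltaCl_mono' (subset_eStarCl' A)))
  exact h2 (h1 hx)

lemma subset_eStarClTheta' (A : Set X) : A ⊆ eStarClTheta A := by
  intro x hx U hU hxU
  exact ⟨x, subset_eStarCl' U hxU, hx⟩

lemma eStarClTheta_mono' {A B : Set X} (h : A ⊆ B) : eStarClTheta A ⊆ eStarClTheta B := by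
  intro x hx U hU hxU
  obtain ⟨y, hy1, hy2⟩ := hx U hU hxU
  exact ⟨y, hy1, h hy2⟩

lemma eStarThetaClosed_of_regular' {V : Set X} (h : EStarRegular V) : EStarThetaClosed V := by
  refine subset_antisymm (subset_eStarClTheta' V) ?_
  intro x hx
  by_contra hxV
  obtain ⟨y, hy1, hy2⟩ := hx Vᶜ h.2 hxV
  rw [eStarCl_eq_self' (show EStarClosed Vᶜ by simpa [EStarClosed] using h.1)] at hy1
  exact hy1 hy2

lemma exists_regular_of_notMem' {A : Set X} {x : X} (hx : x ∉ eStarClTheta A) :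
    ∃ V, EStarRegular V ∧ A ⊆ V ∧ x ∉ V := by
  simp only [eStarClTheta, mem_setOf_eq, not_forall] at hx
  obtain ⟨U, hU, hxU, hemp⟩ := hx
  rw [not_nonempty_iff_eq_empty] at hemp
  refine ⟨(eStarCl U)ᶜ, ⟨?_, ?_⟩, ?_, ?_⟩
  · show EStarOpen (eStarCl U)ᶜ
    exact eStarClosed_eStarCl' U
  · show EStarOpen (eStarCl U)ᶜᶜ
    rw [compl_compl]; exact eStarOpen_eStarCl' hU
  · intro a ha
    intro hmem
    exact (eq_empty_iff_forall_notMem.mp hemp a) ⟨hmem, ha⟩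
  · simp only [mem_compl_iff, not_not]
    exact subset_eStarCl' U hxU

theorem stmt9 (A : Set X) :
    eStarClTheta A = ⋂₀ {V | EStarThetaClosed V ∧ A ⊆ V} ∧
    eStarClTheta A = ⋂₀ {V | EStarRegular V ∧ A ⊆ V} := by
  constructor
  · apply subset_antisymm
    · intro x hx V ⟨hV, hAV⟩
      have := eStarClTheta_mono' hAV hx
      rwa [← hV] at this
    · intro x hx
      by_contra hxc
      obtain ⟨V, hV, hAV, hxV⟩ := exists_regular_of_notMem' hxc
      exact hxV (hx V ⟨eStarThetaClosed_of_regular' hV, hAV⟩)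
  · apply subset_antisymm
    · intro x hx V ⟨hV, hAV⟩
      have := eStarClTheta_mono' hAV hx
      rwa [← eStarThetaClosed_of_regular' hV] at this
    · intro x hx
      by_contra hxc
      obtain ⟨V, hV, hAV, hxV⟩ := exists_regular_of_notMem' hxc
      exact hxV (hx V ⟨hV, hAV⟩)
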